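/- Let π = (d_1, …, d_n) be a non-increasing sequence of nonnegative integers with d_1 ≤ n−1 and σ(π) = d_1 + ⋯ + d_n even, and let f(π) = max{i : d_i ≥ i}. If the Erdős–Gallai inequality ∑_{i=1}^{t} d_i ≤ t(t−1) + ∑_{i=t+1}^{n} min{t, d_i} holds for every t with 1 ≤ t ≤ f(π), then it holds for every t with 1 ≤ t ≤ n−1, and consequently π is graphic. -/

import Mathlib

/-- `G` contains a cycle of length `r`. -/
def hasCycleOfLength {V : Type*} (G : SimpleGraph V) (r : ℕ) : Prop :=
  ∃ (v : V) (c : G.Walk v v), c.IsCycle ∧ c.length = r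

/-- `G` is a realization of the sequence `d`, i.e. `d` is its degree sequence. -/
def IsDegreeSeq {n : ℕ} (G : SimpleGraph (Fin n)) (d : Fin n → ℕ) : Prop :=
  ∀ i, (G.neighborSet i).ncard = d i

/-- The sequence `d` is graphic: it is the degree sequence of a simple graph. -/
def Graphic {n : ℕ} (d : Fin n → ℕ) : Prop :=
  ∃ G : SimpleGraph (Fin n), IsDegreeSeq G d

/-- `d` is potentially ₃Cℓ-graphic: some realization contains cycles of every
length `r` with `3 ≤ r ≤ ℓ`. -/
def Pot3C {n : ℕ} (ℓ : ℕ) (d : Fin n → ℕ) : Prop :=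
  ∃ G : SimpleGraph (Fin n), IsDegreeSeq G d ∧ ∀ r, 3 ≤ r → r ≤ ℓ → hasCycleOfLength G r

/-- `d` is potentially Cℓ-graphic: some realization contains a cycle of length `ℓ`. -/
def PotC {n : ℕ} (ℓ : ℕ) (d : Fin n → ℕ) : Prop :=
  ∃ G : SimpleGraph (Fin n), IsDegreeSeq G d ∧ hasCycleOfLength G ℓ

/-- `d` has a realization `G` containing cycles `C₃, …, C_ℓ` on those vertices with
degrees `d 0, …, d (ℓ-1)`: the induced subgraph on some vertex set `S`, whose multiset
of degrees is that of the first `ℓ` terms of `d`, contains cycles of all lengths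
from `3` to `ℓ`. -/
def RealizationWithCyclesOn {n : ℕ} (ℓ : ℕ) (d : Fin n → ℕ) : Prop :=
  ∃ (G : SimpleGraph (Fin n)) (S : Finset (Fin n)),
    IsDegreeSeq G d ∧ S.card = ℓ ∧
    S.val.map d = (Finset.univ.filter (fun i : Fin n => (i : ℕ) < ℓ)).val.map d ∧
    ∀ r, 3 ≤ r → r ≤ ℓ → hasCycleOfLength (G.induce (S : Set (Fin n))) r

open Finset

variable {n : ℕ}

/-- Left side of the Erdős–Gallai inequality. -/
def EGL (n : ℕ) (d : Fin n → ℕ) (k : ℕ) : ℕ :=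
  ∑ i ∈ Finset.univ.filter (fun i : Fin n => (i : ℕ) < k), d i

/-- Right-side sum of the Erdős–Gallai inequality. -/
def EGM (n : ℕ) (d : Fin n → ℕ) (k : ℕ) : ℕ :=
  ∑ i ∈ Finset.univ.filter (fun i : Fin n => k ≤ (i : ℕ)), min k (d i)

/-- The Erdős–Gallai inequality at level `k`. -/
def EGineq (n : ℕ) (d : Fin n → ℕ) (k : ℕ) : Prop :=
  EGL n d k ≤ k * (k - 1) + EGM n d k

lemma filter_lt_succ (k : ℕ) (hk : k < n) :
    Finset.univ.filter (fun i : Fin n => (i : ℕ) < k + 1) =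
      insert ⟨k, hk⟩ (Finset.univ.filter (fun i : Fin n => (i : ℕ) < k)) := by
  ext i
  simp only [mem_filter, mem_insert, mem_univ, true_and]
  constructor
  · intro h
    rcases Nat.lt_succ_iff_lt_or_eq.mp h with h | h
    · exact Or.inr h
    · exact Or.inl (Fin.ext h)
  · rintro (rfl | h)
    · exact Nat.lt_succ_self k
    · exact Nat.lt_succ_of_lt h

lemma filter_ge_eq_insert (k : ℕ) (hk : k < n) :
    Finset.univ.filter (fun i : Fin n => k ≤ (i : ℕ)) =
      insert ⟨k, hk⟩ (Finset.univ.filter (fun i : Fin n => k + 1 ≤ (i : ℕ))) := by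
  ext i
  simp only [mem_filter, mem_insert, mem_univ, true_and]
  constructor
  · intro h
    rcases Nat.lt_or_ge k i with h' | h'
    · exact Or.inr h'
    · exact Or.inl (Fin.ext (le_antisymm h' h))
  · rintro (rfl | h)
    · exact le_rfl
    · omega

lemma EGL_succ (d : Fin n → ℕ) (k : ℕ) (hk : k < n) :
    EGL n d (k + 1) = EGL n d k + d ⟨k, hk⟩ := by
  rw [EGL, EGL, filter_lt_succ k hk, Finset.sum_insert (by simp)]
  ring

lemma EGM_succ_ge (d : Fin n → ℕ) (k : ℕ) (hk : k < n) :
    EGM n d k ≤ k + EGM n d (k + 1) := by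
  rw [EGM, EGM, filter_ge_eq_insert k hk, Finset.sum_insert (by simp)]
  have h1 : ∑ i ∈ Finset.univ.filter (fun i : Fin n => k + 1 ≤ (i : ℕ)), min k (d i) ≤
      ∑ i ∈ Finset.univ.filter (fun i : Fin n => k + 1 ≤ (i : ℕ)), min (k + 1) (d i) :=
    Finset.sum_le_sum (fun i _ => min_le_min (Nat.le_succ k) le_rfl)
  have h2 : min k (d ⟨k, hk⟩) ≤ k := min_le_left _ _
  omega

/-- The induction step beyond `f`. -/
lemma EGineq_succ (d : Fin n → ℕ) (k : ℕ) (hk : k < n) (hdk : d ⟨k, hk⟩ ≤ k)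
    (h : EGineq n d k) (hk1 : 1 ≤ k) : EGineq n d (k + 1) := by
  have h1 := EGL_succ d k hk
  have h2 := EGM_succ_ge d k hk
  rw [EGineq] at *
  have h4 : (k+1) * (k+1-1) = k * (k-1) + 2*k := by
    cases k with
    | zero => omega
    | succ j => simp only [Nat.succ_sub_one]; ring
  omega

lemma card_filter_lt (m : ℕ) (hm : m ≤ n) :
    (Finset.univ.filter (fun i : Fin n => (i : ℕ) < m)).card = m := by
  induction m with
  | zero => simp
  | succ k ih =>
      rw [filter_lt_succ k (by omega), Finset.card_insert_of_notMem (by simp), ih (by omega)]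

/-- For an antitone sequence, a superlevel set is an initial segment. -/
lemma antitone_filter_eq (d : Fin n → ℕ) (hanti : Antitone d) (c : ℕ) :
    Finset.univ.filter (fun i : Fin n => c ≤ d i) =
      Finset.univ.filter
        (fun i : Fin n => (i : ℕ) < (Finset.univ.filter (fun i : Fin n => c ≤ d i)).card) := by
  set F := Finset.univ.filter (fun i : Fin n => c ≤ d i) with hF
  have hpn : F.card ≤ n := by
    have := Finset.card_filter_le Finset.univ (fun i : Fin n => c ≤ d i)
    simpa using this
  have hsub : F ⊆ Finset.univ.filter (fun i : Fin n => (i : ℕ) < F.card) := by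
    intro i hi
    simp only [hF, Finset.mem_filter, Finset.mem_univ, true_and] at hi
    simp only [Finset.mem_filter, Finset.mem_univ, true_and]
    have h1 : Finset.univ.filter (fun j : Fin n => (j : ℕ) < (i : ℕ) + 1) ⊆ F := by
      intro j hj
      simp only [Finset.mem_filter, Finset.mem_univ, true_and] at hj
      simp only [hF, Finset.mem_filter, Finset.mem_univ, true_and]
      exact le_trans hi (hanti (by exact_mod_cast Nat.lt_succ_iff.mp hj))
    have h2 := Finset.card_le_card h1
    rw [card_filter_lt ((i : ℕ) + 1) (by omega)] at h2
    omega
  exact Finset.eq_of_subset_of_card_le hsub (by rw [card_filter_lt F.card hpn])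

lemma antitone_level_iff (d : Fin n → ℕ) (hanti : Antitone d) (c : ℕ) (i : Fin n) :
    c ≤ d i ↔ (i : ℕ) < (Finset.univ.filter (fun i : Fin n => c ≤ d i)).card := by
  constructor
  · intro h
    have := antitone_filter_eq d hanti c
    have hi : i ∈ Finset.univ.filter (fun i : Fin n => c ≤ d i) := by simp [h]
    rw [this] at hi
    simpa using hi
  · intro h
    have := (antitone_filter_eq d hanti c).symm
    have hi : i ∈ Finset.univ.filter
        (fun i : Fin n => (i : ℕ) < (Finset.univ.filter (fun i : Fin n => c ≤ d i)).card) := by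
      simp [h]
    rw [this] at hi
    simpa using hi

/-- Part A : the Erdős–Gallai inequalities beyond `f` follow from those up to `f`. -/
lemma partA (n : ℕ) (hn : 1 ≤ n) (d : Fin n → ℕ) (hanti : Antitone d)
    (hd1 : d ⟨0, Nat.lt_of_lt_of_le Nat.zero_lt_one hn⟩ ≤ n - 1)
    (f : ℕ) (hfn : f ≤ n)
    (hf : ∀ i : ℕ, ∀ _ : 1 ≤ i, ∀ _ : i ≤ n,
      (i ≤ d ⟨i - 1, Nat.sub_one_lt_of_le (by assumption) (by assumption)⟩ ↔ i ≤ f))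
    (hEG : ∀ t : ℕ, 1 ≤ t → t ≤ f → EGineq n d t) :
    ∀ t : ℕ, 1 ≤ t → t ≤ n - 1 → EGineq n d t := by
  intro t ht htn
  rcases le_or_gt t f with hcase | hcase
  · exact hEG t ht hcase
  -- t > f ; first, f ≤ n - 1
  have hfi : ∀ (i : ℕ) (_ : 1 ≤ i) (_ : i ≤ n) (j : Fin n), (j : ℕ) = i - 1 →
      (i ≤ d j ↔ i ≤ f) := by
    intro i h1 h2 j hj
    have : j = ⟨i - 1, by omega⟩ := Fin.ext hj
    rw [this]
    exact hf i h1 h2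
  have hd0 : ∀ i : Fin n, d i ≤ n - 1 := fun i =>
    le_trans (hanti (show (⟨0, by omega⟩ : Fin n) ≤ i by simp [Fin.le_def])) hd1
  have hfn1 : f ≤ n - 1 := by
    by_contra h
    have h1 := (hfi n hn le_rfl ⟨n - 1, by omega⟩ rfl).mpr (by omega)
    have h2 := hd0 ⟨n - 1, by omega⟩
    omega
  -- key : for all j with f ≤ j ≤ n-1, EGineq n d j, by induction on j
  have base : max f 1 ≤ n - 1 := by omega
  have key : ∀ j : ℕ, max f 1 ≤ j → j ≤ n - 1 → EGineq n d j := by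
    intro j hj
    induction j with
    | zero => omega
    | succ k ih =>
        intro hk1
        rcases le_or_gt (max f 1) k with hmk | hmk
        · -- step case
          have hEGk : EGineq n d k := ih hmk (by omega)
          have hkn : k < n := by omega
          have hdk : d ⟨k, hkn⟩ ≤ k := by
            have h1 := hfi (k + 1) (by omega) (by omega) ⟨k, hkn⟩ rfl
            omega
          exact EGineq_succ d k hkn hdk hEGk (by omega)
        · -- base case : k + 1 = max f 1
          have hkm : k + 1 = max f 1 := by omega
          rcases le_or_gt f 1 with h1 | h1
          · -- max f 1 = 1 : show EGineq n d 1 directly; f ≤ 1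
            have hk0 : k = 0 := by omega
            subst hk0
            rcases Nat.eq_or_lt_of_le h1 with h2 | h2
            · exact hEG 1 le_rfl (by omega)
            · -- f = 0 : all degrees are 0
              have hf0 : f = 0 := by omega
              have hd00 : d ⟨0, by omega⟩ = 0 := by
                have h1 := hfi 1 le_rfl hn ⟨0, by omega⟩ rfl
                omega
              have hz : ∀ i : Fin n, d i = 0 := fun i => Nat.le_zero.mp
                (hd00 ▸ hanti (show (⟨0, by omega⟩ : Fin n) ≤ i by simp [Fin.le_def]))
              show EGineq n d 1
              rw [EGineq, EGL]
              have : ∑ i ∈ Finset.univ.filter (fun i : Fin n => (i : ℕ) < 1), d i = 0 :=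
                Finset.sum_eq_zero (fun i _ => hz i)
              omega
          · have : k + 1 = f := by omega
            exact hEG (k + 1) (by omega) (by omega)
  rcases le_or_gt (max f 1) t with h | h
  · exact key t h htn
  · exact hEG t ht (by omega)

/-- Adding one edge to a realization. -/
lemma add_edge_realize {n : ℕ} (G : SimpleGraph (Fin n)) (e : Fin n → ℕ)
    (hG : IsDegreeSeq G e) (a b : Fin n) (hab : a ≠ b) (hnadj : ¬ G.Adj a b) :
    ∃ H : SimpleGraph (Fin n),
      ∀ i, (H.neighborSet i).ncard = e i + (if i = a ∨ i = b then 1 else 0) := by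
  refine ⟨⟨fun x y => G.Adj x y ∨ (x = a ∧ y = b) ∨ (x = b ∧ y = a), ?_, ?_⟩, ?_⟩
  · constructor; intro x y h
    rcases h with h | h | h
    · exact Or.inl h.symm
    · exact Or.inr (Or.inr ⟨h.2, h.1⟩)
    · exact Or.inr (Or.inl ⟨h.2, h.1⟩)
  · constructor; intro x h
    rcases h with h | h | h
    · exact G.loopless.irrefl x h
    · exact hab (h.1.symm.trans h.2)
    · exact hab (h.2.symm.trans h.1)
  · intro i
    have key : ({ y | G.Adj i y ∨ (i = a ∧ y = b) ∨ (i = b ∧ y = a) } : Set (Fin n)) =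
        (if i = a then insert b (G.neighborSet i) else if i = b then insert a (G.neighborSet i)
          else G.neighborSet i) := by
      ext y
      by_cases hia : i = a
      · rw [if_pos hia]
        simp only [Set.mem_setOf_eq, Set.mem_insert_iff, SimpleGraph.mem_neighborSet]
        constructor
        · rintro (h | h | h)
          · exact Or.inr h
          · exact Or.inl h.2
          · exact absurd (hia.symm.trans h.1) hab
        · rintro (rfl | h)
          · exact Or.inr (Or.inl ⟨hia, rfl⟩)
          · exact Or.inl h
      · by_cases hib : i = b
        · rw [if_neg hia, if_pos hib]
          simp only [Set.mem_setOf_eq, Set.mem_insert_iff, SimpleGraph.mem_neighborSet]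
          constructor
          · rintro (h | h | h)
            · exact Or.inr h
            · exact absurd h.1 hia
            · exact Or.inl h.2
          · rintro (rfl | h)
            · exact Or.inr (Or.inr ⟨hib, rfl⟩)
            · exact Or.inl h
        · rw [if_neg hia, if_neg hib]
          simp only [Set.mem_setOf_eq, SimpleGraph.mem_neighborSet]
          constructor
          · rintro (h | h | h)
            · exact h
            · exact absurd h.1 hia
            · exact absurd h.1 hib
          · exact fun h => Or.inl h
    show ({ y | G.Adj i y ∨ (i = a ∧ y = b) ∨ (i = b ∧ y = a) } : Set (Fin n)).ncard = _
    rw [key]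
    by_cases hia : i = a
    · have hb : b ∉ G.neighborSet i := by rw [hia]; exact fun h => hnadj h
      rw [if_pos hia, Set.ncard_insert_of_notMem hb, hG i, if_pos (Or.inl hia)]
    · by_cases hib : i = b
      · have ha : a ∉ G.neighborSet i := by
          rw [hib]; exact fun h => hnadj (G.adj_symm h)
        rw [if_neg hia, if_pos hib, Set.ncard_insert_of_notMem ha, hG i, if_pos (Or.inr hib)]
      · rw [if_neg hia, if_neg hib, hG i, if_neg (by tauto)]
        simp

/-- The 2-switch plus edge surgery: remove edge `wx`, add edges `tw` and `sx`.
This raises the degrees of `t` and `s` by one and keeps all other degrees. -/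
lemma two_switch_realize {n : ℕ} (G : SimpleGraph (Fin n)) (e : Fin n → ℕ)
    (hG : IsDegreeSeq G e) (t s w x : Fin n)
    (hts : t ≠ s) (htw : t ≠ w) (htx : t ≠ x) (hsw : s ≠ w) (hsx : s ≠ x) (hwx : w ≠ x)
    (hGwx : G.Adj w x) (hGtw : ¬ G.Adj t w) (hGsx : ¬ G.Adj s x) :
    ∃ H : SimpleGraph (Fin n),
      ∀ i, (H.neighborSet i).ncard = e i + (if i = t ∨ i = s then 1 else 0) := by
  have hGwt : ¬ G.Adj w t := fun h => hGtw h.symm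
  have hGxs : ¬ G.Adj x s := fun h => hGsx h.symm
  refine ⟨⟨fun u v =>
      (G.Adj u v ∧ ¬((u = w ∧ v = x) ∨ (u = x ∧ v = w))) ∨
      ((u = t ∧ v = w) ∨ (u = w ∧ v = t)) ∨
      ((u = s ∧ v = x) ∨ (u = x ∧ v = s)), ?_, ?_⟩, ?_⟩
  · constructor; intro u v h
    rcases h with ⟨h1, h2⟩ | h | h
    · exact Or.inl ⟨h1.symm, by tauto⟩
    · exact Or.inr (Or.inl (by tauto))
    · exact Or.inr (Or.inr (by tauto))
  · constructor; intro u h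
    rcases h with ⟨h1, _⟩ | h | h
    · exact G.loopless.irrefl u h1
    · rcases h with ⟨h1, h2⟩ | ⟨h1, h2⟩
      · exact htw (h1.symm.trans h2)
      · exact htw (h2.symm.trans h1)
    · rcases h with ⟨h1, h2⟩ | ⟨h1, h2⟩
      · exact hsx (h1.symm.trans h2)
      · exact hsx (h2.symm.trans h1)
  · intro i
    show ({v | (G.Adj i v ∧ ¬((i = w ∧ v = x) ∨ (i = x ∧ v = w))) ∨
      ((i = t ∧ v = w) ∨ (i = w ∧ v = t)) ∨
      ((i = s ∧ v = x) ∨ (i = x ∧ v = s))} : Set (Fin n)).ncard = _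
    by_cases hit : i = t
    · have hset : ({v | (G.Adj i v ∧ ¬((i = w ∧ v = x) ∨ (i = x ∧ v = w))) ∨
          ((i = t ∧ v = w) ∨ (i = w ∧ v = t)) ∨
          ((i = s ∧ v = x) ∨ (i = x ∧ v = s))} : Set (Fin n)) = insert w (G.neighborSet i) := by
        ext v
        simp only [Set.mem_setOf_eq, Set.mem_insert_iff, SimpleGraph.mem_neighborSet]
        constructor
        · rintro (⟨h1, _⟩ | (h | h) | (h | h))
          · exact Or.inr h1
          · exact Or.inl h.2
          · exact absurd (hit.symm.trans h.1) htw
          · exact absurd (hit.symm.trans h.1) hts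
          · exact absurd (hit.symm.trans h.1) htx
        · rintro (rfl | h)
          · exact Or.inr (Or.inl (Or.inl ⟨hit, rfl⟩))
          · refine Or.inl ⟨h, ?_⟩
            rintro (⟨h1, _⟩ | ⟨h1, _⟩)
            · exact htw (hit.symm.trans h1)
            · exact htx (hit.symm.trans h1)
      have hw' : w ∉ G.neighborSet i := by rw [hit]; exact hGtw
      rw [hset, Set.ncard_insert_of_notMem hw', hG i, if_pos (Or.inl hit)]
    · by_cases his : i = s
      · have hset : ({v | (G.Adj i v ∧ ¬((i = w ∧ v = x) ∨ (i = x ∧ v = w))) ∨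
            ((i = t ∧ v = w) ∨ (i = w ∧ v = t)) ∨
            ((i = s ∧ v = x) ∨ (i = x ∧ v = s))} : Set (Fin n)) =
            insert x (G.neighborSet i) := by
          ext v
          simp only [Set.mem_setOf_eq, Set.mem_insert_iff, SimpleGraph.mem_neighborSet]
          constructor
          · rintro (⟨h1, _⟩ | (h | h) | (h | h))
            · exact Or.inr h1
            · exact absurd (his.symm.trans h.1) (Ne.symm hts)
            · exact absurd (his.symm.trans h.1) hsw
            · exact Or.inl h.2
            · exact absurd (his.symm.trans h.1) hsx
          · rintro (rfl | h)
            · exact Or.inr (Or.inr (Or.inl ⟨his, rfl⟩))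
            · refine Or.inl ⟨h, ?_⟩
              rintro (⟨h1, _⟩ | ⟨h1, _⟩)
              · exact hsw (his.symm.trans h1)
              · exact hsx (his.symm.trans h1)
        have hx' : x ∉ G.neighborSet i := by rw [his]; exact hGsx
        rw [hset, Set.ncard_insert_of_notMem hx', hG i, if_pos (Or.inr his)]
      · by_cases hiw : i = w
        · have hset : ({v | (G.Adj i v ∧ ¬((i = w ∧ v = x) ∨ (i = x ∧ v = w))) ∨
              ((i = t ∧ v = w) ∨ (i = w ∧ v = t)) ∨
              ((i = s ∧ v = x) ∨ (i = x ∧ v = s))} : Set (Fin n)) =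
              insert t (G.neighborSet i \ {x}) := by
            ext v
            simp only [Set.mem_setOf_eq, Set.mem_insert_iff, Set.mem_diff,
              Set.mem_singleton_iff, SimpleGraph.mem_neighborSet]
            constructor
            · rintro (⟨h1, h2⟩ | (h | h) | (h | h))
              · exact Or.inr ⟨h1, fun hvx => h2 (Or.inl ⟨hiw, hvx⟩)⟩
              · exact absurd (hiw.symm.trans h.1) (Ne.symm htw)
              · exact Or.inl h.2
              · exact absurd (hiw.symm.trans h.1) (Ne.symm hsw)
              · exact absurd (hiw.symm.trans h.1) hwx
            · rintro (rfl | ⟨h1, h2⟩)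
              · exact Or.inr (Or.inl (Or.inr ⟨hiw, rfl⟩))
              · refine Or.inl ⟨h1, ?_⟩
                rintro (⟨_, h4⟩ | ⟨h3, _⟩)
                · exact h2 h4
                · exact hwx (hiw.symm.trans h3)
          have ht' : t ∉ G.neighborSet i \ {x} := by
            rw [hiw]; exact fun h => hGwt h.1
          have hx : x ∈ G.neighborSet i := by rw [hiw]; exact hGwx
          rw [hset, Set.ncard_insert_of_notMem ht', Set.ncard_diff_singleton_add_one hx,
            hG i, if_neg (by tauto)]
          simp
        · by_cases hix : i = x
          · have hset : ({v | (G.Adj i v ∧ ¬((i = w ∧ v = x) ∨ (i = x ∧ v = w))) ∨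
                ((i = t ∧ v = w) ∨ (i = w ∧ v = t)) ∨
                ((i = s ∧ v = x) ∨ (i = x ∧ v = s))} : Set (Fin n)) =
                insert s (G.neighborSet i \ {w}) := by
              ext v
              simp only [Set.mem_setOf_eq, Set.mem_insert_iff, Set.mem_diff,
                Set.mem_singleton_iff, SimpleGraph.mem_neighborSet]
              constructor
              · rintro (⟨h1, h2⟩ | (h | h) | (h | h))
                · exact Or.inr ⟨h1, fun hvw => h2 (Or.inr ⟨hix, hvw⟩)⟩
                · exact absurd (hix.symm.trans h.1) (Ne.symm htx)
                · exact absurd (hix.symm.trans h.1) (Ne.symm hwx)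
                · exact absurd (hix.symm.trans h.1) (Ne.symm hsx)
                · exact Or.inl h.2
              · rintro (rfl | ⟨h1, h2⟩)
                · exact Or.inr (Or.inr (Or.inr ⟨hix, rfl⟩))
                · refine Or.inl ⟨h1, ?_⟩
                  rintro (⟨h3, _⟩ | ⟨_, h4⟩)
                  · exact hwx ((hix.symm.trans h3).symm)
                  · exact h2 h4
            have hs' : s ∉ G.neighborSet i \ {w} := by
              rw [hix]; exact fun h => hGxs h.1
            have hw : w ∈ G.neighborSet i := by rw [hix]; exact hGwx.symm
            rw [hset, Set.ncard_insert_of_notMem hs', Set.ncard_diff_singleton_add_one hw,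
              hG i, if_neg (by tauto)]
            simp
          · have hset : ({v | (G.Adj i v ∧ ¬((i = w ∧ v = x) ∨ (i = x ∧ v = w))) ∨
                ((i = t ∧ v = w) ∨ (i = w ∧ v = t)) ∨
                ((i = s ∧ v = x) ∨ (i = x ∧ v = s))} : Set (Fin n)) = G.neighborSet i := by
              ext v
              simp only [Set.mem_setOf_eq, SimpleGraph.mem_neighborSet]
              constructor
              · rintro (⟨h1, _⟩ | (h | h) | (h | h))
                · exact h1
                · exact absurd h.1 hit
                · exact absurd h.1 hiw
                · exact absurd h.1 his
                · exact absurd h.1 hix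
              · intro h
                refine Or.inl ⟨h, ?_⟩
                rintro (⟨h1, _⟩ | ⟨h1, _⟩)
                · exact hiw h1
                · exact hix h1
            rw [hset, hG i, if_neg (by tauto)]
            simp

/-- Existence of a non-neighbor `w` of `t` among the first `s` vertices. -/
lemma exists_w {n : ℕ} (G : SimpleGraph (Fin n)) (e : Fin n → ℕ)
    (hG : IsDegreeSeq G e) (t s : Fin n) (hts : (t : ℕ) < (s : ℕ))
    (hAdj : G.Adj t s) (hdeg : e t < (s : ℕ)) :
    ∃ w : Fin n, (w : ℕ) < (s : ℕ) ∧ w ≠ t ∧ ¬ G.Adj t w := by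
  by_contra hcon
  push_neg at hcon
  set F : Finset (Fin n) :=
    insert s ((Finset.univ.filter (fun i : Fin n => (i : ℕ) < (s : ℕ))).erase t) with hF
  have hsub : (↑F : Set (Fin n)) ⊆ G.neighborSet t := by
    intro i hi
    simp only [hF, Finset.coe_insert, Set.mem_insert_iff, Finset.coe_erase, Set.mem_diff,
      Finset.coe_filter, Set.mem_setOf_eq, Finset.mem_univ, true_and,
      Set.mem_singleton_iff] at hi
    rcases hi with rfl | ⟨hi1, hi2⟩
    · exact hAdj
    · exact hcon i hi1 hi2
  have hcard : F.card = (s : ℕ) := by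
    have ht : t ∈ Finset.univ.filter (fun i : Fin n => (i : ℕ) < (s : ℕ)) := by
      simp only [Finset.mem_filter, Finset.mem_univ, true_and]
      exact hts
    rw [hF, Finset.card_insert_of_notMem (by simp), Finset.card_erase_of_mem ht,
      card_filter_lt (s : ℕ) (le_of_lt s.isLt)]
    omega
  have h1 : F.card ≤ (G.neighborSet t).ncard := by
    rw [← Set.ncard_coe_finset]
    exact Set.ncard_le_ncard hsub (Set.toFinite _)
  rw [hG t, hcard] at h1
  omega

/-- Existence of the fourth vertex `x` for the 2-switch. -/
lemma exists_x {n : ℕ} (G : SimpleGraph (Fin n)) (e : Fin n → ℕ)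
    (hG : IsDegreeSeq G e) (t s w : Fin n)
    (hAdjts : G.Adj t s) (hwt : w ≠ t) (hws : w ≠ s) (hntw : ¬ G.Adj t w)
    (hdeg : e s ≤ e w) :
    ∃ x : Fin n, G.Adj w x ∧ ¬ G.Adj s x ∧ x ≠ s ∧ x ≠ t ∧ x ≠ w := by
  by_contra hcon
  push_neg at hcon
  have hts : t ≠ s := G.ne_of_adj hAdjts
  have htNs : t ∈ G.neighborSet s := hAdjts.symm
  have hnwt : t ∉ G.neighborSet w := fun h => hntw (G.adj_symm h)
  -- every neighbor of w is s or lies in N(s) \ {t, w}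
  by_cases hwNs : w ∈ G.neighborSet s
  · -- w ∈ N(s) : N(w) ⊆ (N(s) \ {t, w}) ∪ {s}
    have hsub : G.neighborSet w ⊆ insert s (G.neighborSet s \ {t, w}) := by
      intro x hx
      have hxw : x ≠ w := fun h => G.loopless.irrefl w (h ▸ hx)
      have hxt : x ≠ t := fun h => hnwt (h ▸ hx)
      rcases eq_or_ne x s with rfl | hxs
      · exact Set.mem_insert _ _
      · refine Set.mem_insert_of_mem _ ⟨?_, ?_⟩
        · have hsx : G.Adj s x := by
            by_contra hno
            exact hxw (hcon x hx hno hxs hxt)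
          exact hsx
        · simp [hxt, hxw]
    have h1 : (G.neighborSet w).ncard ≤ (G.neighborSet s \ {t, w}).ncard + 1 := by
      have := Set.ncard_le_ncard hsub (Set.toFinite _)
      have h2 := Set.ncard_insert_le s (G.neighborSet s \ {t, w})
      omega
    have hpair : ({t, w} : Set (Fin n)) ⊆ G.neighborSet s := by
      intro y hy
      rcases hy with rfl | hy
      · exact htNs
      · rw [Set.mem_singleton_iff] at hy
        subst hy
        exact hwNs
    have h3 : (G.neighborSet s \ {t, w}).ncard = (G.neighborSet s).ncard - 2 := by
      rw [Set.ncard_diff hpair, Set.ncard_pair (Ne.symm hwt)]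
    have h4 : 2 ≤ (G.neighborSet s).ncard := by
      have := Set.ncard_le_ncard hpair (Set.toFinite _)
      rwa [Set.ncard_pair (Ne.symm hwt)] at this
    rw [hG w, hG s] at *
    omega
  · -- w ∉ N(s) : N(w) ⊆ N(s) \ {t}
    have hsub : G.neighborSet w ⊆ G.neighborSet s \ {t} := by
      intro x hx
      have hxw : x ≠ w := fun h => G.loopless.irrefl w (h ▸ hx)
      have hxt : x ≠ t := fun h => hnwt (h ▸ hx)
      have hxs : x ≠ s := by
        rintro rfl
        exact hwNs (G.adj_symm hx)
      refine ⟨?_, by simp [hxt]⟩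
      have hsx : G.Adj s x := by
        by_contra hno
        exact hxw (hcon x hx hno hxs hxt)
      exact hsx
    have h1 : (G.neighborSet w).ncard ≤ (G.neighborSet s \ {t}).ncard :=
      Set.ncard_le_ncard hsub (Set.toFinite _)
    have h2 := Set.ncard_diff_singleton_add_one htNs (Set.toFinite _)
    rw [hG w, hG s] at *
    omega

section SumHelpers

variable {n : ℕ}

lemma sum_split_all (f : Fin n → ℕ) (k : ℕ) :
    ∑ i, f i = (∑ i ∈ Finset.univ.filter (fun i : Fin n => (i : ℕ) < k), f i) +
      ∑ i ∈ Finset.univ.filter (fun i : Fin n => k ≤ (i : ℕ)), f i := by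
  rw [← Finset.sum_filter_add_sum_filter_not Finset.univ (fun i : Fin n => (i : ℕ) < k) f]
  congr 1
  apply Finset.sum_congr _ (fun _ _ => rfl)
  apply Finset.filter_congr
  intro i _
  simp [Nat.not_lt]

lemma sum_split_mid (f : Fin n → ℕ) (k p : ℕ) (hkp : k ≤ p) :
    ∑ i ∈ Finset.univ.filter (fun i : Fin n => k ≤ (i : ℕ)), f i =
      (∑ i ∈ Finset.univ.filter (fun i : Fin n => k ≤ (i : ℕ) ∧ (i : ℕ) < p), f i) +
      ∑ i ∈ Finset.univ.filter (fun i : Fin n => p ≤ (i : ℕ)), f i := by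
  rw [← Finset.sum_filter_add_sum_filter_not
    (Finset.univ.filter (fun i : Fin n => k ≤ (i : ℕ))) (fun i : Fin n => (i : ℕ) < p) f]
  congr 1
  · rw [Finset.filter_filter]
  · rw [Finset.filter_filter]
    apply Finset.sum_congr _ (fun _ _ => rfl)
    apply Finset.filter_congr
    intro i _
    simp only [Nat.not_lt]
    constructor
    · exact fun h => h.2
    · exact fun h => ⟨le_trans hkp h, h⟩

lemma card_filter_mid (k p : ℕ) (hkp : k ≤ p) (hpn : p ≤ n) :
    (Finset.univ.filter (fun i : Fin n => k ≤ (i : ℕ) ∧ (i : ℕ) < p)).card = p - k := by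
  have : Finset.univ.filter (fun i : Fin n => k ≤ (i : ℕ) ∧ (i : ℕ) < p) =
      (Finset.univ.filter (fun i : Fin n => (i : ℕ) < p)) \
      (Finset.univ.filter (fun i : Fin n => (i : ℕ) < k)) := by
    ext i
    simp only [Finset.mem_filter, Finset.mem_univ, true_and, Finset.mem_sdiff]
    omega
  rw [this, Finset.card_sdiff_of_subset (by
    intro i hi
    simp only [Finset.mem_filter, Finset.mem_univ, true_and] at hi ⊢
    omega), card_filter_lt p hpn, card_filter_lt k (le_trans hkp hpn)]

end SumHelpers

theorem graphic_of_EG (m : ℕ) : ∀ (n : ℕ) (d : Fin n → ℕ), (∑ i, d i) = m → Antitone d →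
    (∀ i, d i + 1 ≤ n) → Even m →
    (∀ k, 1 ≤ k → k ≤ n - 1 → EGineq n d k) → Graphic d := by
  induction m using Nat.strong_induction_on with
  | _ m IH =>
  intro n d hsum hanti htop heven hEG
  rcases Nat.eq_zero_or_pos m with rfl | hm
  · refine ⟨⊥, fun i => ?_⟩
    have hz : d i = 0 := by
      have h0 := Finset.sum_eq_zero_iff.mp hsum
      exact h0 i (Finset.mem_univ i)
    have hb : (⊥ : SimpleGraph (Fin n)).neighborSet i = ∅ := by ext; simp
    rw [hz, hb, Set.ncard_empty]
  · -- positive total degree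
    have h0n : 0 < n := by
      rcases Nat.eq_zero_or_pos n with rfl | h
      · simp at hsum; omega
      · exact h
    have hdle : ∀ i : Fin n, d i ≤ d ⟨0, h0n⟩ :=
      fun i => hanti (show (⟨0, h0n⟩ : Fin n) ≤ i by simp [Fin.le_def])
    set d0 := d ⟨0, h0n⟩ with hd0def
    have hd0pos : 1 ≤ d0 := by
      by_contra h
      have hz : ∀ i : Fin n, d i = 0 := fun i => by have := hdle i; omega
      rw [Finset.sum_congr rfl (fun i _ => hz i)] at hsum
      simp at hsum
      omega
    have hn2 : 2 ≤ n := by have := htop ⟨0, h0n⟩; omega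
    -- the number of positive entries
    set b := (Finset.univ.filter (fun i : Fin n => 1 ≤ d i)).card with hbdef
    have hbIff : ∀ i : Fin n, 1 ≤ d i ↔ (i : ℕ) < b := fun i => antitone_level_iff d hanti 1 i
    have hbn : b ≤ n := by
      rw [hbdef]
      have := Finset.card_filter_le Finset.univ (fun i : Fin n => 1 ≤ d i)
      simpa using this
    have hb1 : 1 ≤ b := by have := (hbIff ⟨0, h0n⟩).mp hd0pos; omega
    have hL1 : EGL n d 1 = d0 := by
      rw [EGL]
      have hone : Finset.univ.filter (fun i : Fin n => (i : ℕ) < 1) = {⟨0, h0n⟩} := by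
        ext i
        simp [Nat.lt_one_iff, Fin.ext_iff]
      rw [hone, Finset.sum_singleton]
    have hM1 : EGM n d 1 = b - 1 := by
      rw [EGM, sum_split_mid (fun i => min 1 (d i)) 1 b hb1]
      have h1 : ∑ i ∈ Finset.univ.filter (fun i : Fin n => 1 ≤ (i : ℕ) ∧ (i : ℕ) < b),
          min 1 (d i) = b - 1 := by
        rw [Finset.sum_congr rfl (fun i hi => ?_), Finset.sum_const, card_filter_mid 1 b hb1 hbn,
          smul_eq_mul, mul_one]
        simp only [Finset.mem_filter, Finset.mem_univ, true_and] at hi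
        have := (hbIff i).mpr hi.2
        omega
      have h2 : ∑ i ∈ Finset.univ.filter (fun i : Fin n => b ≤ (i : ℕ)), min 1 (d i) = 0 := by
        apply Finset.sum_eq_zero
        intro i hi
        simp only [Finset.mem_filter, Finset.mem_univ, true_and] at hi
        have := hbIff i
        omega
      rw [h1, h2]
      omega
    have hd0b : d0 ≤ b - 1 := by
      have hEG1 := hEG 1 le_rfl (by omega)
      rw [EGineq, hL1, hM1] at hEG1
      omega
    have hb2 : 2 ≤ b := by omega
    -- the first block
    set a0 := (Finset.univ.filter (fun i : Fin n => d0 ≤ d i)).card with ha0def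
    have ha0Iff : ∀ i : Fin n, d0 ≤ d i ↔ (i : ℕ) < a0 :=
      fun i => antitone_level_iff d hanti d0 i
    have ha01 : 1 ≤ a0 := by have := (ha0Iff ⟨0, h0n⟩).mp le_rfl; omega
    have ha0b : a0 ≤ b := by
      rw [ha0def, hbdef]
      apply Finset.card_le_card
      intro i hi
      simp only [Finset.mem_filter, Finset.mem_univ, true_and] at hi ⊢
      omega
    set a := if a0 = b then b - 1 else a0 with hadef
    have ha1 : 1 ≤ a := by rw [hadef]; split <;> omega
    have hab : a < b := by rw [hadef]; split <;> omega
    have haa0 : a ≤ a0 := by rw [hadef]; split <;> omega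
    have hF1 : ∀ i : Fin n, (i : ℕ) < a → d i = d0 :=
      fun i hi => le_antisymm (hdle i) ((ha0Iff i).mpr (by omega))
    have hF4 : ∀ j : Fin n, a ≤ (j : ℕ) → (j : ℕ) < b - 1 → d j < d0 := by
      intro j h1 h2
      by_cases h : a0 = b
      · rw [hadef, if_pos h] at h1; omega
      · rw [hadef, if_neg h] at h1
        have := ha0Iff j
        omega
    have hta : a - 1 < n := by omega
    have hsb : b - 1 < n := by omega
    set t : Fin n := ⟨a - 1, hta⟩ with htdef
    set s : Fin n := ⟨b - 1, hsb⟩ with hsdef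
    have htv : (t : ℕ) = a - 1 := rfl
    have hsv : (s : ℕ) = b - 1 := rfl
    have hdt : d t = d0 := hF1 t (by omega)
    have hds : 1 ≤ d s := (hbIff s).mpr (by omega)
    have htsv : (t : ℕ) < (s : ℕ) := by omega
    have htsne : t ≠ s := fun h => by rw [h] at htsv; omega
    -- the reduced sequence
    set d' : Fin n → ℕ :=
      (fun i => if (i : ℕ) = a - 1 ∨ (i : ℕ) = b - 1 then d i - 1 else d i) with hd'def
    have hd'val : ∀ i : Fin n,
        d' i = if (i : ℕ) = a - 1 ∨ (i : ℕ) = b - 1 then d i - 1 else d i := by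
      intro i
      rw [hd'def]
    have hd't : d' t = d0 - 1 := by rw [hd'val t, if_pos (Or.inl htv), hdt]
    have hd's : d' s = d s - 1 := by rw [hd'val s, if_pos (Or.inr hsv)]
    have hd'other : ∀ i : Fin n, (i : ℕ) ≠ a - 1 → (i : ℕ) ≠ b - 1 → d' i = d i := by
      intro i h1 h2
      rw [hd'val i, if_neg (by tauto)]
    have hd'le : ∀ i : Fin n, d' i ≤ d i := by
      intro i
      rw [hd'val i]
      split <;> omega
    have hit : ∀ i : Fin n, (i : ℕ) = a - 1 ↔ i = t := by
      intro i
      rw [htdef, Fin.ext_iff]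
    have his : ∀ i : Fin n, (i : ℕ) = b - 1 ↔ i = s := by
      intro i
      rw [hsdef, Fin.ext_iff]
    -- sum of d' over any finset
    have hsum_d' : ∀ F : Finset (Fin n), ∑ i ∈ F, d i =
        (∑ i ∈ F, d' i) + ((if t ∈ F then 1 else 0) + (if s ∈ F then 1 else 0)) := by
      intro F
      have hpt : ∀ i ∈ F, d i =
          d' i + ((if i = t then 1 else 0) + (if i = s then 1 else 0)) := by
        intro i _
        by_cases h1 : i = t
        · rw [if_pos h1, if_neg (h1 ▸ htsne), h1, hd't, hdt]
          omega
        · by_cases h2 : i = s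
          · rw [if_neg h1, if_pos h2, h2, hd's]
            omega
          · rw [if_neg h1, if_neg h2,
              hd'other i (fun hc => h1 ((hit i).mp hc)) (fun hc => h2 ((his i).mp hc))]
            omega
      rw [Finset.sum_congr rfl hpt, Finset.sum_add_distrib, Finset.sum_add_distrib,
        Finset.sum_ite_eq' F t (fun _ => 1), Finset.sum_ite_eq' F s (fun _ => 1)]
    -- d' is antitone
    have hanti' : Antitone d' := by
      intro i j hij
      have hij' : (i : ℕ) ≤ (j : ℕ) := hij
      have hdji := hanti hij
      by_cases hjr : (j : ℕ) = a - 1 ∨ (j : ℕ) = b - 1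
      · have hj' : d' j = d j - 1 := by rw [hd'val j, if_pos hjr]
        by_cases hir : (i : ℕ) = a - 1 ∨ (i : ℕ) = b - 1
        · have hi' : d' i = d i - 1 := by rw [hd'val i, if_pos hir]
          omega
        · have hi' : d' i = d i := by rw [hd'val i, if_neg hir]
          omega
      · have hj' : d' j = d j := by rw [hd'val j, if_neg hjr]
        by_cases hir : (i : ℕ) = a - 1 ∨ (i : ℕ) = b - 1
        · have hi' : d' i = d i - 1 := by rw [hd'val i, if_pos hir]
          rcases hir with hir | hir
          · -- i = t (value d0), j > i and j is not reduced
            have hdi : d i = d0 := hF1 i (by omega)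
            by_cases hjb : (j : ℕ) < b - 1
            · have hja : a ≤ (j : ℕ) := by omega
              have := hF4 j hja hjb
              omega
            · have hjb' : b ≤ (j : ℕ) := by omega
              have hdj : d j = 0 := by have := hbIff j; omega
              omega
          · -- i = s, j > s hence d j = 0
            have hjb' : b ≤ (j : ℕ) := by omega
            have hdj : d j = 0 := by have := hbIff j; omega
            omega
        · have hi' : d' i = d i := by rw [hd'val i, if_neg hir]
          omega
    -- total of d'
    have hsum' : (∑ i, d' i) + 2 = m := by
      have := hsum_d' Finset.univ
      rw [if_pos (Finset.mem_univ t), if_pos (Finset.mem_univ s)] at this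
      omega
    -- Erdős–Gallai inequalities for d'
    have hEG' : ∀ k, 1 ≤ k → k ≤ n - 1 → EGineq n d' k := by
      intro k hk1 hkn
      have hEGk := hEG k hk1 hkn
      rw [EGineq] at hEGk ⊢
      have hL_le : EGL n d' k ≤ EGL n d k := Finset.sum_le_sum (fun i _ => hd'le i)
      by_cases hC1 : b ≤ k
      · -- C1 : both reduced indices are below k, the M-sum is unchanged
        have hMeq : EGM n d' k = EGM n d k := by
          apply Finset.sum_congr rfl
          intro i hi
          simp only [Finset.mem_filter, Finset.mem_univ, true_and] at hi
          rw [hd'other i (by omega) (by omega)]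
        omega
      · push_neg at hC1
        by_cases hC2 : a ≤ k
        · -- C2 : a ≤ k < b
          have hM_ge : EGM n d k ≤ EGM n d' k + 1 := by
            have hpt : ∀ i ∈ Finset.univ.filter (fun i : Fin n => k ≤ (i : ℕ)),
                min k (d i) ≤ min k (d' i) + (if i = s then 1 else 0) := by
              intro i hi
              simp only [Finset.mem_filter, Finset.mem_univ, true_and] at hi
              by_cases h2 : i = s
              · rw [if_pos h2, h2, hd's]
                omega
              · rw [if_neg h2, hd'other i (by omega) (fun hc => h2 ((his i).mp hc))]
                omega
            have h3 := Finset.sum_le_sum hpt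
            rw [Finset.sum_add_distrib,
              Finset.sum_ite_eq' (Finset.univ.filter (fun i : Fin n => k ≤ (i : ℕ))) s
                (fun _ => 1)] at h3
            rw [EGM, EGM]
            split at h3 <;> omega
          have hLeq : EGL n d' k + 1 = EGL n d k := by
            have h4 := hsum_d' (Finset.univ.filter (fun i : Fin n => (i : ℕ) < k))
            rw [if_pos (by simp only [Finset.mem_filter, Finset.mem_univ, true_and, htv]; omega),
              if_neg (by simp only [Finset.mem_filter, Finset.mem_univ, true_and, hsv]; omega)]
              at h4
            rw [EGL, EGL]
            omega
          omega
        · -- C3 : k < a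
          push_neg at hC2
          have hLeq : EGL n d' k = EGL n d k := by
            apply Finset.sum_congr rfl
            intro i hi
            simp only [Finset.mem_filter, Finset.mem_univ, true_and] at hi
            rw [hd'other i (by omega) (by omega)]
          have hLconst : ∀ q : ℕ, q ≤ a → EGL n d q = q * d0 := by
            intro q hq
            have h1 : ∀ i ∈ Finset.univ.filter (fun i : Fin n => (i : ℕ) < q), d i = d0 := by
              intro i hi
              simp only [Finset.mem_filter, Finset.mem_univ, true_and] at hi
              exact hF1 i (by omega)
            rw [EGL, Finset.sum_congr rfl h1, Finset.sum_const, card_filter_lt q (by omega),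
              smul_eq_mul]
          have hLk : EGL n d k = k * d0 := hLconst k (by omega)
          by_cases hC3a : d0 ≤ k
          · -- C3a : all degrees are at most k
            -- the M-sum for d' is just the sum of remaining degrees
            have hMval : EGM n d' k = ∑ i ∈ Finset.univ.filter (fun i : Fin n => k ≤ (i : ℕ)),
                d' i := by
              apply Finset.sum_congr rfl
              intro i _
              have := hd'le i
              have := hdle i
              omega
            have h4 := hsum_d' (Finset.univ.filter (fun i : Fin n => k ≤ (i : ℕ)))
            rw [if_pos (by simp only [Finset.mem_filter, Finset.mem_univ, true_and, htv]; omega),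
              if_pos (by simp only [Finset.mem_filter, Finset.mem_univ, true_and, hsv]; omega)]
              at h4
            -- goal reduces to : 2*(k*d0) + 2 ≤ k*(k-1) + m
            have hstar : 2 * (k * d0) + 2 ≤ k * (k - 1) + m := by
              -- decompose m = a*d0 + Mid
              have hz : ∑ i ∈ Finset.univ.filter (fun i : Fin n => b ≤ (i : ℕ)), d i = 0 := by
                apply Finset.sum_eq_zero
                intro i hi
                simp only [Finset.mem_filter, Finset.mem_univ, true_and] at hi
                have := hbIff i
                omega
              have hsplita : (∑ i, d i) = EGL n d a +
                  ∑ i ∈ Finset.univ.filter (fun i : Fin n => a ≤ (i : ℕ)), d i :=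
                sum_split_all d a
              have hsplitm := sum_split_mid d a b (le_of_lt hab)
              have hLa : EGL n d a = a * d0 := hLconst a le_rfl
              set Mid := ∑ i ∈ Finset.univ.filter
                (fun i : Fin n => a ≤ (i : ℕ) ∧ (i : ℕ) < b), d i with hMiddef
              have hmsum : m = a * d0 + Mid := by omega
              have hMid_ge : b - a ≤ Mid := by
                have h5 : ∀ i ∈ Finset.univ.filter
                    (fun i : Fin n => a ≤ (i : ℕ) ∧ (i : ℕ) < b), 1 ≤ d i := by
                  intro i hi
                  simp only [Finset.mem_filter, Finset.mem_univ, true_and] at hi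
                  exact (hbIff i).mpr hi.2
                have h6 := Finset.sum_le_sum h5
                rw [Finset.sum_const, card_filter_mid a b (le_of_lt hab) hbn, smul_eq_mul,
                  mul_one] at h6
                omega
              obtain ⟨K, rfl⟩ : ∃ K, k = K + 1 := ⟨k - 1, by omega⟩
              by_cases hba : a + 2 ≤ b
              · -- Mid ≥ 2
                have h1 : (K + 2) * d0 ≤ a * d0 := Nat.mul_le_mul_right d0 (by omega)
                have h2 : K * d0 ≤ K * (K + 1) := Nat.mul_le_mul_left K (by omega)
                have e1 : 2 * ((K + 1) * d0) = 2 * (K * d0) + 2 * d0 := by ring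
                have e2 : (K + 2) * d0 = K * d0 + 2 * d0 := by ring
                have e3 : (K + 1) * (K + 1 - 1) = K * (K + 1) := by
                  simp only [Nat.add_sub_cancel]; ring
                omega
              · -- b = a + 1 and Mid = d s
                have hba' : b = a + 1 := by omega
                have hMids : Mid = d s := by
                  rw [hMiddef]
                  have : Finset.univ.filter (fun i : Fin n => a ≤ (i : ℕ) ∧ (i : ℕ) < b) =
                      {s} := by
                    ext i
                    simp only [Finset.mem_filter, Finset.mem_univ, true_and,
                      Finset.mem_singleton, Fin.ext_iff, hsv]
                    omega
                  rw [this, Finset.sum_singleton]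
                have hds_le : d s ≤ d0 := hdle s
                by_cases haK : K + 3 ≤ a
                · have h1 : (K + 3) * d0 ≤ a * d0 := Nat.mul_le_mul_right d0 (by omega)
                  have h2 : K * d0 ≤ K * (K + 1) := Nat.mul_le_mul_left K (by omega)
                  have e1 : 2 * ((K + 1) * d0) = 2 * (K * d0) + 2 * d0 := by ring
                  have e2 : (K + 3) * d0 = K * d0 + 3 * d0 := by ring
                  have e3 : (K + 1) * (K + 1 - 1) = K * (K + 1) := by
                    simp only [Nat.add_sub_cancel]; ring
                  omega
                · -- a = K + 2 exactly (since a ≥ k + 1 = K + 2)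
                  have haK' : a = K + 2 := by omega
                  by_cases hd0K : d0 ≤ K
                  · have h2 : K * d0 ≤ K * K := Nat.mul_le_mul_left K hd0K
                    have e1 : 2 * ((K + 1) * d0) = 2 * (K * d0) + 2 * d0 := by ring
                    have e2 : (K + 2) * d0 = K * d0 + 2 * d0 := by ring
                    have e3 : (K + 1) * (K + 1 - 1) = K * K + K := by
                      simp only [Nat.add_sub_cancel]; ring
                    rw [haK'] at hmsum
                    omega
                  · -- d0 = K + 1 = k : parity forces d s ≥ 2
                    have hd0K' : d0 = K + 1 := by omega
                    have hpar : Even ((K + 1) * (K + 2)) := Nat.even_mul_succ_self (K + 1)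
                    obtain ⟨c1, hc1⟩ := hpar
                    obtain ⟨c2, hc2⟩ := heven
                    rw [haK', hd0K'] at hmsum
                    have e0 : (K + 2) * (K + 1) = (K + 1) * (K + 2) := by ring
                    have hds2 : 2 ≤ d s := by omega
                    have e1 : 2 * ((K + 1) * (K + 1)) = 2 * ((K + 1) * (K + 1)) := rfl
                    have e3 : (K + 1) * (K + 1 - 1) = K * (K + 1) := by
                      simp only [Nat.add_sub_cancel]; ring
                    have e4 : (K + 1) * (K + 2) = K * (K + 1) + 2 * (K + 1) := by ring
                    have e5 : 2 * ((K + 1) * (K + 1)) = 2 * (K * (K + 1)) + 2 * (K + 1) := by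
                      ring
                    have e6 : 2 * (K * (K + 1)) ≤ K * (K + 1) + K * (K + 1) := by omega
                    rw [hd0K']
                    omega
            have hsplit2 : (∑ i, d i) = EGL n d k +
                ∑ i ∈ Finset.univ.filter (fun i : Fin n => k ≤ (i : ℕ)), d i :=
              sum_split_all d k
            rw [hLeq, hLk]
            omega
          · push_neg at hC3a
            by_cases hC3b : k + 1 ≤ d s
            · -- C3b : M-sum unchanged
              have hMeq : EGM n d' k = EGM n d k := by
                apply Finset.sum_congr rfl
                intro i hi
                simp only [Finset.mem_filter, Finset.mem_univ, true_and] at hi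
                by_cases h1 : i = t
                · rw [h1, hd't, hdt]
                  omega
                · by_cases h2 : i = s
                  · rw [h2, hd's]
                    omega
                  · rw [hd'other i (fun hc => h1 ((hit i).mp hc))
                      (fun hc => h2 ((his i).mp hc))]
              omega
            · -- C3c : the hard case, d0 ≥ k+1 > d s
              push_neg at hC3b
              -- p = number of entries that are ≥ k+1
              set p := (Finset.univ.filter (fun i : Fin n => k + 1 ≤ d i)).card with hpdef
              have hpIff : ∀ i : Fin n, k + 1 ≤ d i ↔ (i : ℕ) < p :=
                fun i => antitone_level_iff d hanti (k + 1) i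
              have hap : a ≤ p := by
                have := (hpIff t).mp (by omega)
                omega
              have hpb : p ≤ b - 1 := by
                have := hpIff s
                omega
              have hkp : k ≤ p := by omega
              -- T = sum of small entries
              set T := ∑ i ∈ Finset.univ.filter (fun i : Fin n => p ≤ (i : ℕ)), d i with hTdef
              have hMk : EGM n d k = (p - k) * k + T := by
                rw [EGM, sum_split_mid (fun i => min k (d i)) k p hkp]
                have h5 : ∑ i ∈ Finset.univ.filter
                    (fun i : Fin n => k ≤ (i : ℕ) ∧ (i : ℕ) < p), min k (d i) = (p - k) * k := by
                  rw [Finset.sum_congr rfl (fun i hi => ?_), Finset.sum_const,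
                    card_filter_mid k p hkp (by omega), smul_eq_mul]
                  simp only [Finset.mem_filter, Finset.mem_univ, true_and] at hi
                  have := (hpIff i).mpr hi.2
                  omega
                have h6 : ∑ i ∈ Finset.univ.filter (fun i : Fin n => p ≤ (i : ℕ)), min k (d i)
                    = T := by
                  rw [hTdef]
                  apply Finset.sum_congr rfl
                  intro i hi
                  simp only [Finset.mem_filter, Finset.mem_univ, true_and] at hi
                  have := hpIff i
                  omega
                rw [h5, h6]
              have hT1 : 1 ≤ T := by
                have h7 : d s ≤ T := by
                  rw [hTdef]
                  apply Finset.single_le_sum (fun i _ => Nat.zero_le (d i))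
                  simp only [Finset.mem_filter, Finset.mem_univ, true_and, hsv]
                  omega
                omega
              -- strictness of the Erdős–Gallai inequality at k
              have hstrict : EGL n d k + 1 ≤ k * (k - 1) + EGM n d k := by
                rcases Nat.lt_or_ge (EGL n d k) (k * (k - 1) + EGM n d k) with h | h
                · omega
                · exfalso
                  have hEq : k * d0 = k * (k - 1) + ((p - k) * k + T) := by omega
                  have eid1 : k * (k - 1) + (p - k) * k = k * (p - 1) := by
                    have h8 : p - 1 = (k - 1) + (p - k) := by omega
                    rw [h8, Nat.mul_add, mul_comm (p - k) k]
                  have hEq' : k * d0 = k * (p - 1) + T := by omega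
                  have hd0p : p ≤ d0 := by
                    have h9 : k * (p - 1) < k * d0 := by omega
                    have := Nat.lt_of_mul_lt_mul_left h9
                    omega
                  -- Erdős–Gallai at a gives a contradiction
                  have hEGa := hEG a ha1 (by omega)
                  rw [EGineq] at hEGa
                  have hLa : EGL n d a = a * d0 := hLconst a le_rfl
                  have hMa : EGM n d a ≤ (p - a) * a + T := by
                    rw [EGM, sum_split_mid (fun i => min a (d i)) a p hap]
                    have h5 : (∑ i ∈ Finset.univ.filter (fun i : Fin n => a ≤ (i : ℕ) ∧ (i : ℕ) < p), min a (d i)) ≤ (p - a) * a := by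
                      have h5a : (∑ i ∈ Finset.univ.filter (fun i : Fin n => a ≤ (i : ℕ) ∧ (i : ℕ) < p), min a (d i)) ≤ ∑ _i ∈ Finset.univ.filter (fun i : Fin n => a ≤ (i : ℕ) ∧ (i : ℕ) < p), a :=
                        Finset.sum_le_sum (fun i _ => min_le_left a (d i))
                      rw [Finset.sum_const, card_filter_mid a p hap (by omega),
                        smul_eq_mul] at h5a
                      exact h5a
                    have h6 : ∑ i ∈ Finset.univ.filter (fun i : Fin n => p ≤ (i : ℕ)),
                        min a (d i) ≤ T := by
                      rw [hTdef]
                      exact Finset.sum_le_sum (fun i _ => min_le_right a (d i))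
                    omega
                  have eid2 : a * (a - 1) + (p - a) * a = a * (p - 1) := by
                    have h8 : p - 1 = (a - 1) + (p - a) := by omega
                    rw [h8, Nat.mul_add, mul_comm (p - a) a]
                  have hfin : a * d0 + k * (p - 1) ≤ a * (p - 1) + k * d0 := by omega
                  obtain ⟨e, he1, he2⟩ : ∃ e, d0 = (p - 1) + e ∧ 1 ≤ e :=
                    ⟨d0 - (p - 1), by omega, by omega⟩
                  rw [he1, Nat.mul_add, Nat.mul_add] at hfin
                  have h9 : a * e ≤ k * e := by omega
                  have h10 : a ≤ k := Nat.le_of_mul_le_mul_right h9 (by omega)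
                  omega
              -- M-sum decreases by at most one
              have hM_ge : EGM n d k ≤ EGM n d' k + 1 := by
                have hpt : ∀ i ∈ Finset.univ.filter (fun i : Fin n => k ≤ (i : ℕ)),
                    min k (d i) ≤ min k (d' i) + (if i = s then 1 else 0) := by
                  intro i hi
                  by_cases h2 : i = s
                  · rw [if_pos h2, h2, hd's]
                    omega
                  · rw [if_neg h2]
                    by_cases h1 : i = t
                    · rw [h1, hd't, hdt]
                      omega
                    · rw [hd'other i (fun hc => h1 ((hit i).mp hc))
                        (fun hc => h2 ((his i).mp hc))]
                      omega
                have h3 := Finset.sum_le_sum hpt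
                rw [Finset.sum_add_distrib,
                  Finset.sum_ite_eq' (Finset.univ.filter (fun i : Fin n => k ≤ (i : ℕ))) s
                    (fun _ => 1)] at h3
                rw [EGM, EGM]
                split at h3 <;> omega
              omega
    -- apply the induction hypothesis
    have hIH := IH (m - 2) (by omega) n d' (by omega) hanti'
      (fun i => le_trans (by have := hd'le i; omega) (htop i))
      (by rcases heven with ⟨c, hc⟩; exact ⟨c - 1, by omega⟩) hEG'
    obtain ⟨G', hG'⟩ := hIH
    -- now add the edge or perform the 2-switch
    have hfinish : ∀ H : SimpleGraph (Fin n),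
        (∀ i, (H.neighborSet i).ncard = d' i + (if i = t ∨ i = s then 1 else 0)) →
        Graphic d := by
      intro H hH
      refine ⟨H, fun i => ?_⟩
      rw [hH i]
      by_cases h1 : i = t
      · rw [if_pos (Or.inl h1), h1, hd't, hdt]; omega
      · by_cases h2 : i = s
        · rw [if_pos (Or.inr h2), h2, hd's]; omega
        · rw [if_neg (by tauto),
            hd'other i (fun hc => h1 ((hit i).mp hc)) (fun hc => h2 ((his i).mp hc))]
          omega
    by_cases hadj : G'.Adj t s
    · -- 2-switch needed
      have hd't_lt : d' t < (s : ℕ) := by rw [hd't, hsv]; omega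
      obtain ⟨w, hw1, hw2, hw3⟩ := exists_w G' d' hG' t s htsv hadj hd't_lt
      have hws : w ≠ s := fun h => by rw [h] at hw1; omega
      have hdegw : d' s ≤ d' w := hanti' (show w ≤ s by rw [Fin.le_def]; omega)
      obtain ⟨x, hx1, hx2, hx3, hx4, hx5⟩ := exists_x G' d' hG' t s w hadj hw2 hws hw3 hdegw
      obtain ⟨H, hH⟩ := two_switch_realize G' d' hG' t s w x htsne (Ne.symm hw2) (Ne.symm hx4)
        (Ne.symm hws) (Ne.symm hx3) (Ne.symm hx5) hx1 hw3 hx2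
      exact hfinish H hH
    · -- just add the edge t-s
      obtain ⟨H, hH⟩ := add_edge_realize G' d' hG' t s htsne hadj
      exact hfinish H hH

/-- **Remark after Theorem 2.2 (Erdős–Gallai with fewer inequalities).** Let
`π = (d₁,…,dₙ)` be a non-increasing sequence of nonnegative integers with `d₁ ≤ n-1` and
even sum, and let `f = max{i : dᵢ ≥ i}` (so, as `π` is non-increasing, `dᵢ ≥ i ↔ i ≤ f`
for `1 ≤ i ≤ n`). If the Erdős–Gallai inequality
`∑_{i=1}^t dᵢ ≤ t(t-1) + ∑_{i=t+1}^n min{t, dᵢ}` holds for every `1 ≤ t ≤ f`, then it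
holds for every `1 ≤ t ≤ n-1`, and consequently `π` is graphic. -/
theorem erdos_gallai_partial (n : ℕ) (hn : 1 ≤ n) (d : Fin n → ℕ)
    (hanti : Antitone d) (hd1 : d ⟨0, by omega⟩ ≤ n - 1) (heven : Even (∑ i, d i))
    (f : ℕ) (hfn : f ≤ n)
    (hf : ∀ i : ℕ, ∀ _ : 1 ≤ i, ∀ _ : i ≤ n, (i ≤ d ⟨i - 1, by omega⟩ ↔ i ≤ f))
    (hEG : ∀ t : ℕ, 1 ≤ t → t ≤ f →
      ∑ i ∈ Finset.univ.filter (fun i : Fin n => (i : ℕ) < t), d i ≤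
        t * (t - 1) + ∑ i ∈ Finset.univ.filter (fun i : Fin n => t ≤ (i : ℕ)), min t (d i)) :
    (∀ t : ℕ, 1 ≤ t → t ≤ n - 1 →
      ∑ i ∈ Finset.univ.filter (fun i : Fin n => (i : ℕ) < t), d i ≤
        t * (t - 1) + ∑ i ∈ Finset.univ.filter (fun i : Fin n => t ≤ (i : ℕ)), min t (d i)) ∧
    Graphic d := by
  have hA : ∀ t : ℕ, 1 ≤ t → t ≤ n - 1 → EGineq n d t :=
    partA n hn d hanti hd1 f hfn hf (fun t ht1 htf => hEG t ht1 htf)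
  constructor
  · exact fun t ht htn => hA t ht htn
  · refine graphic_of_EG (∑ i, d i) n d rfl hanti ?_ heven hA
    intro i
    have h1 : d i ≤ d ⟨0, by omega⟩ :=
      hanti (show (⟨0, by omega⟩ : Fin n) ≤ i by simp [Fin.le_def])
    omega
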